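/- Lemma 3.2. Let (X,f) be an expansive homeomorphism of a compact metric space, let Φ = {log φ_n}_{n∈ℕ} be a subadditive potential on (X,f), and define Ψ = {log ψ_n}_{n∈ℕ} on (X×X, f×f) by ψ_n(x,y) = φ_n(x)·φ_n(y). Then Ψ is a subadditive potential, and P(Ψ) = 2P(Φ). -/
import Mathlib


open Filter MeasureTheory
open scoped ENNReal

namespace SubEq

variable {X : Type*}

/-! ### Bowen balls, separated sets, topological pressure -/

/-- The Bowen ball `B_n(x,ε)` with respect to a distance function `ρ` and a map `f`. -/
def bowenBall (ρ : X → X → ℝ) (f : X → X) (n : ℕ) (ε : ℝ) (x : X) : Set X :=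
  {y | ∀ k < n, ρ (f^[k] x) (f^[k] y) ≤ ε}

/-- `E` is `(n,ε)`-separated for `f` with respect to the distance `ρ`. -/
def IsSeparatedSet (ρ : X → X → ℝ) (f : X → X) (n : ℕ) (ε : ℝ) (E : Finset X) : Prop :=
  ∀ x ∈ E, ∀ y ∈ E, x ≠ y → ∃ k < n, ε ≤ ρ (f^[k] x) (f^[k] y)

/-- The subadditive topological pressure
`P(Φ) = lim_{ε→0} limsup_n (1/n) log sup { Σ_{x∈E} φ_n x : E (n,ε)-separated }`;
since the inner quantity is monotone as `ε` decreases, the limit as `ε → 0` is the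
supremum over `ε > 0`. -/
noncomputable def pressure (ρ : X → X → ℝ) (f : X → X) (φ : ℕ → X → ℝ) : ℝ :=
  sSup {p : ℝ | ∃ ε > (0:ℝ), p = atTop.limsup (fun n =>
    Real.log (sSup ((fun E : Finset X => ∑ x ∈ E, φ n x) ''
      {E : Finset X | IsSeparatedSet ρ f n ε E})) / n)}

/-- `Φ = {log φ_n}` is a subadditive potential on `(X,f)`:
each `φ_n` is continuous and positive and
`log φ_{m+n} ≤ log φ_m + log φ_n ∘ f^m`. -/
def IsSubadditivePotential [TopologicalSpace X] (f : X → X) (φ : ℕ → X → ℝ) : Prop :=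
  (∀ n, Continuous (φ n)) ∧ (∀ n x, 0 < φ n x) ∧
    ∀ m n, 1 ≤ m → 1 ≤ n → ∀ x : X,
      Real.log (φ (m + n) x) ≤ Real.log (φ m x) + Real.log (φ n (f^[m] x))

/-! ### Kolmogorov–Sinai entropy -/

/-- Static entropy `H_μ(ξ)` of the finite partition of `X` given by the fibers of
`p : X → ι`. -/
noncomputable def partInfo [MeasurableSpace X] (μ : Measure X) {ι : Type} [Fintype ι]
    (p : X → ι) : ℝ :=
  ∑ i : ι, Real.negMulLog ((μ (p ⁻¹' {i})).toReal)

/-- The dynamical refinement `⋁_{k=0}^{n-1} f^{-k} ξ` of the partition given by `p`. -/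
def refinePart (f : X → X) {ι : Type} (p : X → ι) (n : ℕ) : X → (Fin n → ι) :=
  fun x k => p (f^[(k : ℕ)] x)

/-- Entropy of `f` relative to the partition given by `p`; by subadditivity the limit
defining it equals the infimum. -/
noncomputable def entropyOfPart [MeasurableSpace X] (μ : Measure X) (f : X → X)
    {ι : Type} [Fintype ι] (p : X → ι) : ℝ :=
  ⨅ n : ℕ, partInfo μ (refinePart f p (n + 1)) / (n + 1)

/-- The Kolmogorov–Sinai entropy `h_μ(f)`: the supremum over all finite measurable
partitions of the corresponding partition entropies. -/
noncomputable def entropyKS [MeasurableSpace X] (μ : Measure X) (f : X → X) : ℝ :=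
  sSup {h : ℝ | ∃ (m : ℕ) (p : X → Fin m),
    (∀ i, MeasurableSet (p ⁻¹' {i})) ∧ h = entropyOfPart μ f p}

/-! ### Equilibrium states -/

/-- `μ` is an equilibrium state of the subadditive potential `Φ = {log φ_n}`:
it is an `f`-invariant Borel probability measure with
`h_μ(f) + lim_n (1/n) ∫ log φ_n dμ = P(Φ)`. -/
def IsEqState [TopologicalSpace X] [MeasurableSpace X] (ρ : X → X → ℝ) (f : X → X)
    (φ : ℕ → X → ℝ) (μ : Measure X) : Prop :=
  IsProbabilityMeasure μ ∧ MeasurePreserving f μ μ ∧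
    ∃ L : ℝ, Tendsto (fun n => (∫ x, Real.log (φ n x) ∂μ) / n) atTop (nhds L) ∧
      entropyKS μ f + L = pressure ρ f φ

/-- Bounded distortion: there is `C ≥ 1` such that for all sufficiently small `ε > 0`,
all `x`, `n` and all `y,z ∈ B_n(x,ε)` one has `C⁻¹ ≤ φ_n(y)/φ_n(z) ≤ C`. -/
def HasBoundedDistortion (ρ : X → X → ℝ) (f : X → X) (φ : ℕ → X → ℝ) : Prop :=
  ∃ C : ℝ, 1 ≤ C ∧ ∃ ε₀ > (0:ℝ), ∀ ε, 0 < ε → ε ≤ ε₀ → ∀ (x : X) (n : ℕ),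
    ∀ y ∈ bowenBall ρ f n ε x, ∀ z ∈ bowenBall ρ f n ε x,
      C⁻¹ ≤ φ n y / φ n z ∧ φ n y / φ n z ≤ C

/-- The lower subadditive Gibbs property:
for every `ε > 0` there is `C ≥ 1` with `μ(B_n(x,ε)) ≥ C⁻¹ e^{-nP(Φ)} φ_n(x)`. -/
def HasLowerGibbs [TopologicalSpace X] [MeasurableSpace X] (ρ : X → X → ℝ) (f : X → X)
    (φ : ℕ → X → ℝ) (μ : Measure X) : Prop :=
  ∀ ε > (0:ℝ), ∃ C : ℝ, 1 ≤ C ∧ ∀ (x : X) (n : ℕ),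
    ENNReal.ofReal (C⁻¹ * Real.exp (-(n : ℝ) * pressure ρ f φ) * φ n x)
      ≤ μ (bowenBall ρ f n ε x)

/-- Expansivity of an invertible map `f` with inverse `finv`. -/
def IsExpansive (ρ : X → X → ℝ) (f finv : X → X) : Prop :=
  ∃ ε₀ > (0:ℝ), ∀ x y : X,
    (∀ n : ℕ, ρ (f^[n] x) (f^[n] y) ≤ ε₀ ∧ ρ (finv^[n] x) (finv^[n] y) ≤ ε₀) → x = y

/-! ### Mixing properties -/

/-- The Kolmogorov property of the invertible measure-preserving system `(X,μ,f)`
(`finv` is the inverse of `f`): there is a sub-σ-algebra `K` with `K ⊆ fK`,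
`⋁_{n≥0} f^n K` the full σ-algebra, and `⋂_{n≥0} f^{-n} K` trivial mod `μ`. -/
def HasKProperty [m : MeasurableSpace X] (μ : Measure X) (f finv : X → X) : Prop :=
  ∃ K : MeasurableSpace X, K ≤ m ∧ K ≤ K.map f ∧
    (⨆ n : ℕ, K.map (f^[n])) = m ∧
    ∀ A : Set X, MeasurableSet[⨅ n : ℕ, K.map (finv^[n])] A → μ A = 0 ∨ μ A = 1

/-- Mixing of a measure-preserving system. -/
def IsMixing [MeasurableSpace X] (μ : Measure X) (f : X → X) : Prop :=
  ∀ A B : Set X, MeasurableSet A → MeasurableSet B →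
    Tendsto (fun n => μ ((f^[n]) ⁻¹' A ∩ B)) atTop (nhds (μ A * μ B))

/-- A set of natural numbers has upper density zero. -/
def UpperDensityZero (E : Set ℕ) : Prop :=
  Tendsto (fun n => (Nat.card (E ∩ Set.Iio n : Set ℕ) : ℝ) / n) atTop (nhds 0)

/-- Weak mixing: for all measurable `A,B` there is a set `E ⊆ ℕ` of upper density zero
such that `μ(f^n A ∩ B) → μ(A)μ(B)` along `n ∉ E`. -/
def IsWeaklyMixing [MeasurableSpace X] (μ : Measure X) (f : X → X) : Prop :=
  ∀ A B : Set X, MeasurableSet A → MeasurableSet B →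
    ∃ E : Set ℕ, UpperDensityZero E ∧
      Tendsto (fun n => μ ((f^[n]) ⁻¹' A ∩ B)) (atTop ⊓ Filter.principal Eᶜ)
        (nhds (μ A * μ B))

/-- Total ergodicity: `f^n` is ergodic for every `n ≥ 1`. -/
def IsTotallyErgodic [MeasurableSpace X] (μ : Measure X) (f : X → X) : Prop :=
  ∀ n : ℕ, 1 ≤ n → Ergodic (f^[n]) μ

/-! ### Measure-theoretic isomorphism and the Bernoulli property -/

/-- Measure-theoretic isomorphism of the systems `(X,μ,f)` and `(Y,ν,g)`. -/
def IsMeasureIso {Y : Type*} [MeasurableSpace X] [MeasurableSpace Y]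
    (μ : Measure X) (ν : Measure Y) (f : X → X) (g : Y → Y) : Prop :=
  ∃ Θ : X → Y, Measurable Θ ∧ Measure.map Θ μ = ν ∧
    (∀ᵐ x ∂μ, Θ (f x) = g (Θ x)) ∧
    ∃ Ψ : Y → X, Measurable Ψ ∧ (∀ᵐ x ∂μ, Ψ (Θ x) = x) ∧ (∀ᵐ y ∂ν, Θ (Ψ y) = y)

/-- The left shift on a full shift space `ℤ → ι`. -/
def fullShift {ι : Type*} : (ℤ → ι) → (ℤ → ι) := fun x i => x (i + 1)

/-- `(X,μ,f)` is Bernoulli: it is measurably isomorphic to a Bernoulli shift, i.e. to a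
two-sided full shift on a finite alphabet equipped with a product (i.i.d.) measure. -/
def IsBernoulli [MeasurableSpace X] (μ : Measure X) (f : X → X) : Prop :=
  ∃ (m : ℕ) (p : Fin m → ℝ≥0∞), (∑ i : Fin m, p i) = 1 ∧
    ∃ ν : Measure (ℤ → Fin m),
      (∀ (s : Finset ℤ) (a : ℤ → Fin m),
        ν {x : ℤ → Fin m | ∀ i ∈ s, x i = a i} = ∏ i ∈ s, p (a i)) ∧
      IsMeasureIso μ ν f fullShift

/-! ### Auxiliary lemmas -/

section Aux

variable {Y : Type*}

lemma separated_subset {ρ : Y → Y → ℝ} {g : Y → Y} {n : ℕ} {ε : ℝ} {E F : Finset Y}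
    (hEF : E ⊆ F) (hF : IsSeparatedSet ρ g n ε F) : IsSeparatedSet ρ g n ε E :=
  fun x hx y hy h => hF x (hEF hx) y (hEF hy) h

lemma separated_anti {ρ : Y → Y → ℝ} {g : Y → Y} {ε ε' : ℝ} (h : ε ≤ ε') {n : ℕ} {E : Finset Y}
    (hE : IsSeparatedSet ρ g n ε' E) : IsSeparatedSet ρ g n ε E := by
  intro x hx y hy hxy
  obtain ⟨k, hk, hd⟩ := hE x hx y hy hxy
  exact ⟨k, hk, le_trans h hd⟩

lemma empty_separated (ρ : Y → Y → ℝ) (g : Y → Y) (n : ℕ) (ε : ℝ) :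
    IsSeparatedSet ρ g n ε (∅ : Finset Y) := by
  intro x hx
  simp at hx

lemma singleton_separated (ρ : Y → Y → ℝ) (g : Y → Y) (n : ℕ) (ε : ℝ) (z : Y) :
    IsSeparatedSet ρ g n ε ({z} : Finset Y) := by
  intro x hx y hy hxy
  simp only [Finset.mem_singleton] at hx hy
  exact absurd (hx.trans hy.symm) hxy

lemma pressure_of_isEmpty [MetricSpace Y] [IsEmpty Y] (g : Y → Y) (χ : ℕ → Y → ℝ) :
    pressure dist g χ = 0 := by
  have himg : ∀ n ε, ((fun E : Finset Y => ∑ x ∈ E, χ n x) ''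
      {E : Finset Y | IsSeparatedSet dist g n ε E}) = {0} := by
    intro n ε
    apply Set.eq_singleton_iff_unique_mem.2
    refine ⟨⟨∅, empty_separated _ _ _ _, by simp⟩, ?_⟩
    rintro s ⟨E, -, rfl⟩
    simp [Finset.eq_empty_of_isEmpty E]
  unfold pressure
  have hfun : ∀ ε : ℝ, (fun n : ℕ => Real.log (sSup ((fun E : Finset Y => ∑ x ∈ E, χ n x) ''
      {E : Finset Y | IsSeparatedSet dist g n ε E})) / n) = fun _ => (0:ℝ) := by
    intro ε
    funext n
    rw [himg, csSup_singleton, Real.log_zero, zero_div]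
  have hset : {p : ℝ | ∃ ε > (0:ℝ), p = atTop.limsup (fun n =>
      Real.log (sSup ((fun E : Finset Y => ∑ x ∈ E, χ n x) ''
        {E : Finset Y | IsSeparatedSet dist g n ε E})) / n)} = {0} := by
    apply Set.eq_singleton_iff_unique_mem.2
    constructor
    · exact ⟨1, one_pos, by rw [hfun, limsup_const]⟩
    · rintro p ⟨ε, hε, rfl⟩
      rw [hfun, limsup_const]
  rw [hset, csSup_singleton]

variable [MetricSpace Y] [CompactSpace Y]

lemma exists_card_bound (g : Y → Y) {ε : ℝ} (hε : 0 < ε) :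
    ∃ N : ℕ, (Nonempty Y → 1 ≤ N) ∧ ∀ (n : ℕ) (E : Finset Y),
      IsSeparatedSet dist g n ε E → E.card ≤ N ^ n := by
  obtain ⟨t, ht⟩ := isCompact_univ.elim_finite_subcover (fun y : Y => Metric.ball y (ε/2))
      (fun y => Metric.isOpen_ball)
      (fun y _ => Set.mem_iUnion.2 ⟨y, Metric.mem_ball_self (by linarith)⟩)
  have hcov : ∀ z : Y, ∃ a, a ∈ t ∧ z ∈ Metric.ball a (ε/2) := by
    intro z
    have := ht (Set.mem_univ z)
    simpa using this
  refine ⟨t.card, ?_, ?_⟩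
  · rintro ⟨y⟩
    obtain ⟨a, ha, -⟩ := hcov y
    exact Finset.card_pos.2 ⟨a, ha⟩
  · intro n E hE
    choose c hc1 hc2 using hcov
    have hinj : Set.InjOn (fun y (k : Fin n) => (⟨c (g^[(k:ℕ)] y), hc1 _⟩ : {a // a ∈ t})) ↑E := by
      intro x hx y hy hxy
      by_contra hne
      obtain ⟨k, hk, hd⟩ := hE x hx y hy hne
      have hck := congrFun hxy ⟨k, hk⟩
      simp only [Subtype.mk.injEq] at hck
      have h1 := hc2 (g^[k] x)
      have h2 := hc2 (g^[k] y)
      rw [Metric.mem_ball] at h1 h2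
      rw [hck] at h1
      have : dist (g^[k] x) (g^[k] y) < ε := by
        calc dist (g^[k] x) (g^[k] y)
            ≤ dist (g^[k] x) (c (g^[k] y)) + dist (c (g^[k] y)) (g^[k] y) := dist_triangle ..
          _ < ε/2 + ε/2 := by rw [dist_comm (c (g^[k] y))]; exact add_lt_add h1 h2
          _ = ε := by ring
      linarith
    calc E.card ≤ (Finset.univ : Finset (Fin n → {a // a ∈ t})).card :=
          Finset.card_le_card_of_injOn _ (fun a _ => Finset.mem_univ _) hinj
      _ = t.card ^ n := by
          rw [Finset.card_univ, Fintype.card_fun, Fintype.card_coe, Fintype.card_fin]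

end Aux

section Prod

variable {X : Type*} [MetricSpace X]

lemma dist_prod_iterate (f : X → X) (k : ℕ) (p q : X × X) :
    dist ((Prod.map f f)^[k] p) ((Prod.map f f)^[k] q)
      = max (dist (f^[k] p.1) (f^[k] q.1)) (dist (f^[k] p.2) (f^[k] q.2)) := by
  rw [Prod.map_iterate, Prod.dist_eq]
  rfl

lemma prod_separated (f : X → X) {n : ℕ} {ε : ℝ} {E : Finset X}
    (hE : IsSeparatedSet dist f n ε E) :
    IsSeparatedSet dist (Prod.map f f) n ε (E ×ˢ E) := by
  intro p hp q hq hpq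
  rcases Finset.mem_product.1 hp with ⟨hp1, hp2⟩
  rcases Finset.mem_product.1 hq with ⟨hq1, hq2⟩
  rcases (not_and_or.1 (fun h => hpq (Prod.ext h.1 h.2))) with h | h
  · obtain ⟨k, hk, hd⟩ := hE p.1 hp1 q.1 hq1 h
    exact ⟨k, hk, by rw [dist_prod_iterate]; exact hd.trans (le_max_left _ _)⟩
  · obtain ⟨k, hk, hd⟩ := hE p.2 hp2 q.2 hq2 h
    exact ⟨k, hk, by rw [dist_prod_iterate]; exact hd.trans (le_max_right _ _)⟩

lemma key_greedy (f : X → X) (χ : X → ℝ) (hχ : ∀ x, 0 < χ x)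
    {n : ℕ} {ε : ℝ} (hε : 0 < ε) (S : ℝ)
    (hS : ∀ E : Finset X, IsSeparatedSet dist f n ε E → ∑ x ∈ E, χ x ≤ S) :
    ∀ F : Finset (X × X), IsSeparatedSet dist (Prod.map f f) n ε F →
      ∃ E : Finset X, (∀ x ∈ E, ∃ p ∈ F, Prod.fst p = x) ∧
        IsSeparatedSet dist f n (ε/2) E ∧
        ∑ p ∈ F, χ p.1 * χ p.2 ≤ S * ∑ x ∈ E, χ x := by
  classical
  intro F
  induction F using Finset.strongInduction with
  | _ F IH =>
    intro hF
    rcases F.eq_empty_or_nonempty with rfl | hFne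
    · exact ⟨∅, by simp, by intro x hx; simp at hx, by simp⟩
    obtain ⟨x₁, hx₁A, hmax⟩ := Finset.exists_max_image (F.image Prod.fst) χ (hFne.image _)
    obtain ⟨p₀, hp₀F, hp₀⟩ := Finset.mem_image.1 hx₁A
    set cond : X × X → Prop := fun p => ∀ k < n, dist (f^[k] p.1) (f^[k] x₁) < ε/2 with hcond
    have hp₀cond : cond p₀ := by
      intro k hk
      rw [hp₀]
      simpa using by positivity
    have hF₂ssub : F.filter (fun p => ¬ cond p) ⊂ F :=
      (Finset.ssubset_iff_of_subset (Finset.filter_subset _ _)).2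
        ⟨p₀, hp₀F, fun h => (Finset.mem_filter.1 h).2 hp₀cond⟩
    obtain ⟨E', hE'orig, hE'sep, hE'sum⟩ :=
      IH _ hF₂ssub (separated_subset (Finset.filter_subset _ _) hF)
    have hfar : ∀ x ∈ E', ∃ k < n, ε/2 ≤ dist (f^[k] x) (f^[k] x₁) := by
      intro x hx
      obtain ⟨p, hp, hp1⟩ := hE'orig x hx
      have hnc := (Finset.mem_filter.1 hp).2
      simp only [hcond] at hnc
      push_neg at hnc
      obtain ⟨k, hk, hd⟩ := hnc
      rw [hp1] at hd
      exact ⟨k, hk, hd⟩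
    have hx₁E' : x₁ ∉ E' := by
      intro hx
      obtain ⟨k, hk, hd⟩ := hfar x₁ hx
      simp at hd
      linarith
    refine ⟨insert x₁ E', ?_, ?_, ?_⟩
    · intro x hx
      rcases Finset.mem_insert.1 hx with rfl | hx
      · exact ⟨p₀, hp₀F, hp₀⟩
      · obtain ⟨p, hp, hp1⟩ := hE'orig x hx
        exact ⟨p, Finset.filter_subset _ _ hp, hp1⟩
    · intro x hx y hy hxy
      rcases Finset.mem_insert.1 hx with hx1 | hx2
      · rcases Finset.mem_insert.1 hy with hy1 | hy2
        · exact absurd (hx1.trans hy1.symm) hxy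
        · subst hx1
          obtain ⟨k, hk, hd⟩ := hfar y hy2
          exact ⟨k, hk, by rwa [dist_comm]⟩
      · rcases Finset.mem_insert.1 hy with hy1 | hy2
        · subst hy1
          obtain ⟨k, hk, hd⟩ := hfar x hx2
          exact ⟨k, hk, hd⟩
        · exact hE'sep x hx2 y hy2 hxy
    · have hd1lt : ∀ p ∈ F.filter cond, ∀ q ∈ F.filter cond, ∀ k < n,
          dist (f^[k] p.1) (f^[k] q.1) < ε := by
        intro p hp q hq k hk
        have hcp := (Finset.mem_filter.1 hp).2 k hk
        have hcq := (Finset.mem_filter.1 hq).2 k hk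
        calc dist (f^[k] p.1) (f^[k] q.1)
            ≤ dist (f^[k] p.1) (f^[k] x₁) + dist (f^[k] x₁) (f^[k] q.1) := dist_triangle ..
          _ < ε/2 + ε/2 := by rw [dist_comm (f^[k] x₁)]; exact add_lt_add hcp hcq
          _ = ε := by ring
      have hinj2 : ∀ p ∈ F.filter cond, ∀ q ∈ F.filter cond, p.2 = q.2 → p = q := by
        intro p hp q hq h2
        by_contra hne
        obtain ⟨k, hk, hd⟩ :=
          hF p (Finset.filter_subset _ _ hp) q (Finset.filter_subset _ _ hq) hne
        rw [dist_prod_iterate, h2] at hd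
        simp only [dist_self, max_eq_left dist_nonneg] at hd
        exact absurd hd (not_le.2 (hd1lt p hp q hq k hk))
      have hsnd_sep : IsSeparatedSet dist f n ε ((F.filter cond).image Prod.snd) := by
        intro y hy y' hy' hne
        obtain ⟨p, hp, rfl⟩ := Finset.mem_image.1 hy
        obtain ⟨q, hq, rfl⟩ := Finset.mem_image.1 hy'
        have hpq : p ≠ q := fun h => hne (by rw [h])
        obtain ⟨k, hk, hd⟩ :=
          hF p (Finset.filter_subset _ _ hp) q (Finset.filter_subset _ _ hq) hpq
        rw [dist_prod_iterate] at hd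
        refine ⟨k, hk, ?_⟩
        rcases le_or_gt ε (dist (f^[k] p.2) (f^[k] q.2)) with h | h
        · exact h
        · exact absurd hd (not_le.2 (max_lt (hd1lt p hp q hq k hk) h))
      have hsum1 : ∑ p ∈ F.filter cond, χ p.1 * χ p.2 ≤ χ x₁ * S := by
        calc ∑ p ∈ F.filter cond, χ p.1 * χ p.2
            ≤ ∑ p ∈ F.filter cond, χ x₁ * χ p.2 := by
              refine Finset.sum_le_sum fun p hp => ?_
              exact mul_le_mul_of_nonneg_right
                (hmax p.1 (Finset.mem_image_of_mem _ (Finset.filter_subset _ _ hp)))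
                (hχ p.2).le
          _ = χ x₁ * ∑ y ∈ (F.filter cond).image Prod.snd, χ y := by
              rw [Finset.sum_image hinj2, Finset.mul_sum]
          _ ≤ χ x₁ * S := mul_le_mul_of_nonneg_left (hS _ hsnd_sep) (hχ x₁).le
      have hsplit := Finset.sum_filter_add_sum_filter_not F cond (fun p => χ p.1 * χ p.2)
      rw [Finset.sum_insert hx₁E', mul_add]
      rw [show ∑ p ∈ F, χ p.1 * χ p.2
          = ∑ p ∈ F.filter cond, χ p.1 * χ p.2
            + ∑ p ∈ F.filter (fun p => ¬ cond p), χ p.1 * χ p.2 from hsplit.symm]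
      nlinarith [hsum1, hE'sum]

end Prod

/-- **Lemma 3.2.** For a subadditive potential `Φ = {log φ_n}` on an expansive
homeomorphism `(X,f)` of a compact metric space, the sequence
`Ψ = {log ψ_n}` on `(X×X, f×f)` with `ψ_n(x,y) = φ_n(x)·φ_n(y)` is a subadditive
potential and `P(Ψ) = 2 P(Φ)` (the product carries the max metric). -/
theorem product_potential_subadditive_and_pressure
    {X : Type*} [MetricSpace X] [CompactSpace X]
    (f finv : X → X) (hf : Continuous f) (hfinv : Continuous finv)
    (hleft : Function.LeftInverse finv f) (hright : Function.RightInverse finv f)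
    (hexp : IsExpansive dist f finv)
    (φ : ℕ → X → ℝ) (hφ : IsSubadditivePotential f φ) :
    IsSubadditivePotential (Prod.map f f) (fun n p => φ n p.1 * φ n p.2) ∧
      pressure dist (Prod.map f f) (fun n p => φ n p.1 * φ n p.2)
        = 2 * pressure dist f φ := by
  classical
  obtain ⟨hcont, hpos, hsub⟩ := hφ
  have part1 : IsSubadditivePotential (Prod.map f f) (fun n p => φ n p.1 * φ n p.2) := by
    refine ⟨fun n => ((hcont n).comp continuous_fst).mul ((hcont n).comp continuous_snd),
      fun n p => mul_pos (hpos n p.1) (hpos n p.2), ?_⟩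
    intro m n hm hn p
    have hit : (Prod.map f f)^[m] p = (f^[m] p.1, f^[m] p.2) := by
      rw [Prod.map_iterate]; rfl
    show Real.log (φ (m + n) p.1 * φ (m + n) p.2)
        ≤ Real.log (φ m p.1 * φ m p.2)
          + Real.log (φ n ((Prod.map f f)^[m] p).1 * φ n ((Prod.map f f)^[m] p).2)
    rw [hit]
    rw [Real.log_mul (hpos _ _).ne' (hpos _ _).ne', Real.log_mul (hpos _ _).ne' (hpos _ _).ne',
      Real.log_mul (hpos _ _).ne' (hpos _ _).ne']
    have h1 := hsub m n hm hn p.1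
    have h2 := hsub m n hm hn p.2
    linarith
  refine ⟨part1, ?_⟩
  rcases isEmpty_or_nonempty X with hemp | hne
  · rw [pressure_of_isEmpty, pressure_of_isEmpty]
    ring
  -- Notation
  set SS : ℕ → ℝ → Set ℝ := fun n ε =>
    (fun E : Finset X => ∑ x ∈ E, φ n x) '' {E : Finset X | IsSeparatedSet dist f n ε E}
    with hSS
  set SS2 : ℕ → ℝ → Set ℝ := fun n ε =>
    (fun E : Finset (X × X) => ∑ x ∈ E, φ n x.1 * φ n x.2) ''
      {E : Finset (X × X) | IsSeparatedSet dist (Prod.map f f) n ε E} with hSS2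
  set S : ℕ → ℝ → ℝ := fun n ε => sSup (SS n ε) with hS
  set S2 : ℕ → ℝ → ℝ := fun n ε => sSup (SS2 n ε) with hS2
  set u : ℝ → ℕ → ℝ := fun ε n => Real.log (S n ε) / n with hu
  set v : ℝ → ℕ → ℝ := fun ε n => Real.log (S2 n ε) / n with hv
  have hPu : pressure dist f φ
      = sSup {p : ℝ | ∃ ε > (0:ℝ), p = atTop.limsup (u ε)} := rfl
  have hPv : pressure dist (Prod.map f f) (fun n p => φ n p.1 * φ n p.2)
      = sSup {p : ℝ | ∃ ε > (0:ℝ), p = atTop.limsup (v ε)} := rfl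
  -- maximizers
  have hxm : ∀ n : ℕ, ∃ z : X, ∀ y : X, φ n y ≤ φ n z := by
    intro n
    obtain ⟨z, -, hz⟩ := isCompact_univ.exists_isMaxOn Set.univ_nonempty (hcont n).continuousOn
    exact ⟨z, fun y => hz (Set.mem_univ y)⟩
  choose xm hxm using hxm
  set a : ℕ → ℝ := fun n => Real.log (φ n (xm n)) with ha
  -- cardinality bound
  have hcards := fun (ε : ℝ) (hε : 0 < ε) => exists_card_bound f hε
  choose Nf hNf1 hNf2 using hcards
  -- basic facts on S
  have hSmem : ∀ (ε : ℝ) (n : ℕ) (E : Finset X),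
      IsSeparatedSet dist f n ε E → (∑ x ∈ E, φ n x) ∈ SS n ε := by
    intro ε n E hE
    exact ⟨E, hE, rfl⟩
  have hSSne : ∀ ε n, (SS n ε).Nonempty := by
    intro ε n
    exact ⟨0, ∅, empty_separated _ _ _ _, by simp⟩
  have hSbound : ∀ (ε : ℝ) (hε : 0 < ε) (n : ℕ) (E : Finset X),
      IsSeparatedSet dist f n ε E → ∑ x ∈ E, φ n x ≤ ((Nf ε hε : ℝ)) ^ n * φ n (xm n) := by
    intro ε hε n E hE
    calc ∑ x ∈ E, φ n x ≤ E.card • φ n (xm n) :=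
          Finset.sum_le_card_nsmul _ _ _ (fun x _ => hxm n x)
      _ = (E.card : ℝ) * φ n (xm n) := by rw [nsmul_eq_mul]
      _ ≤ ((Nf ε hε : ℝ)) ^ n * φ n (xm n) := by
          have hc : (E.card : ℝ) ≤ ((Nf ε hε : ℝ)) ^ n := by
            have := hNf2 ε hε n E hE
            exact_mod_cast this
          exact mul_le_mul_of_nonneg_right hc (hpos n (xm n)).le
  have hSbdd : ∀ (ε : ℝ), 0 < ε → ∀ n, BddAbove (SS n ε) := by
    intro ε hε n
    refine ⟨((Nf ε hε : ℝ)) ^ n * φ n (xm n), ?_⟩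
    rintro s ⟨E, hE, rfl⟩
    exact hSbound ε hε n E hE
  have hmemS : ∀ (ε : ℝ), 0 < ε → ∀ (n : ℕ) (E : Finset X),
      IsSeparatedSet dist f n ε E → ∑ x ∈ E, φ n x ≤ S n ε := by
    intro ε hε n E hE
    exact le_csSup (hSbdd ε hε n) (hSmem ε n E hE)
  have hSx : ∀ (ε : ℝ), 0 < ε → ∀ (n : ℕ) (x : X), φ n x ≤ S n ε := by
    intro ε hε n x
    have := hmemS ε hε n {x} (singleton_separated _ _ _ _ _)
    simpa using this
  have hSpos : ∀ (ε : ℝ), 0 < ε → ∀ n, 0 < S n ε := by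
    intro ε hε n
    exact (hpos n (xm n)).trans_le (hSx ε hε n (xm n))
  have hSub : ∀ (ε : ℝ) (hε : 0 < ε) (n : ℕ), S n ε ≤ ((Nf ε hε : ℝ)) ^ n * φ n (xm n) := by
    intro ε hε n
    exact csSup_le (hSSne ε n) (by rintro s ⟨E, hE, rfl⟩; exact hSbound ε hε n E hE)
  have hSmono : ∀ (ε ε' : ℝ), 0 < ε → ε ≤ ε' → ∀ n, S n ε' ≤ S n ε := by
    intro ε ε' hε hεε' n
    refine csSup_le_csSup (hSbdd ε hε n) (hSSne ε' n) ?_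
    rintro s ⟨E, hE, rfl⟩
    exact ⟨E, separated_anti hεε' hE, rfl⟩
  -- product side
  have hkey : ∀ (ε : ℝ), 0 < ε → ∀ (n : ℕ) (F : Finset (X × X)),
      IsSeparatedSet dist (Prod.map f f) n ε F →
        ∑ p ∈ F, φ n p.1 * φ n p.2 ≤ S n ε * S n (ε/2) := by
    intro ε hε n F hF
    obtain ⟨E, -, hEsep, hEsum⟩ :=
      key_greedy f (φ n) (hpos n) hε (S n ε) (hmemS ε hε n) F hF
    calc ∑ p ∈ F, φ n p.1 * φ n p.2 ≤ S n ε * ∑ x ∈ E, φ n x := hEsum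
      _ ≤ S n ε * S n (ε/2) :=
          mul_le_mul_of_nonneg_left (hmemS (ε/2) (by linarith) n E hEsep) (hSpos ε hε n).le
  have hSS2ne : ∀ ε n, (SS2 n ε).Nonempty := by
    intro ε n
    exact ⟨0, ∅, empty_separated _ _ _ _, by simp⟩
  have hS2bdd : ∀ (ε : ℝ), 0 < ε → ∀ n, BddAbove (SS2 n ε) := by
    intro ε hε n
    refine ⟨S n ε * S n (ε/2), ?_⟩
    rintro s ⟨F, hF, rfl⟩
    exact hkey ε hε n F hF
  have hS2le : ∀ (ε : ℝ), 0 < ε → ∀ n, S2 n ε ≤ S n (ε/2) ^ 2 := by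
    intro ε hε n
    refine csSup_le (hSS2ne ε n) ?_
    rintro s ⟨F, hF, rfl⟩
    calc ∑ p ∈ F, φ n p.1 * φ n p.2 ≤ S n ε * S n (ε/2) := hkey ε hε n F hF
      _ ≤ S n (ε/2) * S n (ε/2) :=
          mul_le_mul_of_nonneg_right (hSmono (ε/2) ε (by linarith) (by linarith) n)
            (hSpos (ε/2) (by linarith) n).le
      _ = S n (ε/2) ^ 2 := (sq _).symm
  have hS2pos : ∀ (ε : ℝ), 0 < ε → ∀ n, 0 < S2 n ε := by
    intro ε hε n
    have hmem : φ n (xm n) * φ n (xm n) ∈ SS2 n ε := by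
      refine ⟨{(xm n, xm n)}, singleton_separated _ _ _ _ _, by simp⟩
    exact (mul_pos (hpos n (xm n)) (hpos n (xm n))).trans_le (le_csSup (hS2bdd ε hε n) hmem)
  have hS2ge : ∀ (ε : ℝ), 0 < ε → ∀ n, S n ε ^ 2 ≤ S2 n ε := by
    intro ε hε n
    have hsq : S n ε ≤ Real.sqrt (S2 n ε) := by
      refine csSup_le (hSSne ε n) ?_
      rintro s ⟨E, hE, rfl⟩
      rw [Real.le_sqrt (Finset.sum_nonneg fun x _ => (hpos n x).le) (hS2pos ε hε n).le]
      have hmem : (∑ p ∈ E ×ˢ E, φ n p.1 * φ n p.2) ∈ SS2 n ε :=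
        ⟨E ×ˢ E, prod_separated f hE, rfl⟩
      have heq : (∑ x ∈ E, φ n x) ^ 2 = ∑ p ∈ E ×ˢ E, φ n p.1 * φ n p.2 := by
        rw [sq, Finset.sum_mul_sum, Finset.sum_product]
      rw [heq]
      exact le_csSup (hS2bdd ε hε n) hmem
    calc S n ε ^ 2 ≤ Real.sqrt (S2 n ε) ^ 2 :=
          pow_le_pow_left₀ (hSpos ε hε n).le hsq 2
      _ = S2 n ε := Real.sq_sqrt (hS2pos ε hε n).le
  -- log-level inequalities
  set c₁ : ℝ := max (Real.log (φ 1 (xm 1))) 0 with hc₁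
  have ha_le : ∀ n : ℕ, 1 ≤ n → a n ≤ n * c₁ := by
    intro n hn
    induction n, hn using Nat.le_induction with
    | base =>
        simp only [ha, Nat.cast_one, one_mul]
        exact le_max_left _ _
    | succ n hn ih =>
        have h := hsub 1 n le_rfl hn (xm (n + 1))
        rw [add_comm 1 n] at h
        have h1 : Real.log (φ 1 (xm (n+1))) ≤ c₁ :=
          le_trans (Real.log_le_log (hpos 1 _) (hxm 1 _)) (le_max_left _ _)
        have h2 : Real.log (φ n (f^[1] (xm (n+1)))) ≤ a n :=
          Real.log_le_log (hpos n _) (hxm n _)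
        have hc₁0 : 0 ≤ c₁ := le_max_right _ _
        have : a (n+1) ≤ c₁ + n * c₁ := by
          calc a (n+1) ≤ Real.log (φ 1 (xm (n+1))) + Real.log (φ n (f^[1] (xm (n+1)))) := h
            _ ≤ c₁ + a n := add_le_add h1 h2
            _ ≤ c₁ + n * c₁ := by linarith
        push_cast
        linarith
  have hadiv : ∀ n : ℕ, 1 ≤ n → a n / n ≤ c₁ := by
    intro n hn
    have hn0 : (0:ℝ) < n := by exact_mod_cast hn
    rw [div_le_iff₀ hn0]
    calc a n ≤ n * c₁ := ha_le n hn
      _ = c₁ * n := mul_comm _ _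
  have hu_le : ∀ (ε : ℝ) (hε : 0 < ε) (n : ℕ), 1 ≤ n →
      u ε n ≤ Real.log (Nf ε hε) + a n / n := by
    intro ε hε n hn
    have hn0 : (0:ℝ) < n := by exact_mod_cast hn
    have hN1 : 1 ≤ Nf ε hε := hNf1 ε hε hne
    have hNpos : (0:ℝ) < (Nf ε hε : ℝ) := by exact_mod_cast hN1
    have hlog : Real.log (S n ε) ≤ n * Real.log (Nf ε hε) + a n := by
      calc Real.log (S n ε) ≤ Real.log (((Nf ε hε : ℝ)) ^ n * φ n (xm n)) :=
            Real.log_le_log (hSpos ε hε n) (hSub ε hε n)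
        _ = n * Real.log (Nf ε hε) + a n := by
            rw [Real.log_mul (by positivity) (hpos n (xm n)).ne', Real.log_pow]
    have : u ε n ≤ (n * Real.log (Nf ε hε) + a n) / n := by
      exact div_le_div_of_nonneg_right hlog hn0.le |>.trans_eq rfl
    calc u ε n ≤ (n * Real.log (Nf ε hε) + a n) / n := this
      _ = Real.log (Nf ε hε) + a n / n := by
          rw [add_div, mul_div_cancel_left₀ _ hn0.ne']
  have hu_ge : ∀ (ε : ℝ), 0 < ε → ∀ n : ℕ, 1 ≤ n → a n / n ≤ u ε n := by
    intro ε hε n hn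
    have hn0 : (0:ℝ) < n := by exact_mod_cast hn
    exact div_le_div_of_nonneg_right (Real.log_le_log (hpos n (xm n)) (hSx ε hε n (xm n))) hn0.le
  have h2uv : ∀ (ε : ℝ), 0 < ε → ∀ n : ℕ, 1 ≤ n → 2 * u ε n ≤ v ε n := by
    intro ε hε n hn
    have hn0 : (0:ℝ) < n := by exact_mod_cast hn
    have hlog : 2 * Real.log (S n ε) ≤ Real.log (S2 n ε) := by
      have := Real.log_le_log (pow_pos (hSpos ε hε n) 2) (hS2ge ε hε n)
      rwa [Real.log_pow, Nat.cast_ofNat] at this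
    calc 2 * u ε n = (2 * Real.log (S n ε)) / n := by rw [hu]; ring
      _ ≤ Real.log (S2 n ε) / n := div_le_div_of_nonneg_right hlog hn0.le
  have hv2u : ∀ (ε : ℝ), 0 < ε → ∀ n : ℕ, 1 ≤ n → v ε n ≤ 2 * u (ε/2) n := by
    intro ε hε n hn
    have hn0 : (0:ℝ) < n := by exact_mod_cast hn
    have hlog : Real.log (S2 n ε) ≤ 2 * Real.log (S n (ε/2)) := by
      have := Real.log_le_log (hS2pos ε hε n) (hS2le ε hε n)
      rwa [Real.log_pow, Nat.cast_ofNat] at this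
    calc v ε n ≤ (2 * Real.log (S n (ε/2))) / n := div_le_div_of_nonneg_right hlog hn0.le
      _ = 2 * u (ε/2) n := by rw [hu]; ring
  -- dichotomy on the growth of `a n / n`
  by_cases hdeg : ∀ c : ℝ, ∀ᶠ n in atTop, a n / n ≤ c
  · -- degenerate case: all limsups are `sInf univ = 0`
    have hinf_univ : sInf (Set.univ : Set ℝ) = 0 := by
      refine Real.sInf_of_not_bddBelow ?_
      rintro ⟨b, hb⟩
      have := hb (Set.mem_univ (b - 1))
      linarith
    have hL0 : ∀ ε : ℝ, 0 < ε → atTop.limsup (u ε) = 0 := by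
      intro ε hε
      rw [limsup_eq]
      have hset : {t : ℝ | ∀ᶠ n in atTop, u ε n ≤ t} = Set.univ := by
        ext t
        simp only [Set.mem_setOf_eq, Set.mem_univ, iff_true]
        filter_upwards [hdeg (t - Real.log (Nf ε hε)), eventually_ge_atTop 1] with n h1 h2
        have := hu_le ε hε n h2
        linarith
      rw [hset, hinf_univ]
    have hM0 : ∀ ε : ℝ, 0 < ε → atTop.limsup (v ε) = 0 := by
      intro ε hε
      have hε2 : 0 < ε / 2 := by linarith
      rw [limsup_eq]
      have hset : {t : ℝ | ∀ᶠ n in atTop, v ε n ≤ t} = Set.univ := by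
        ext t
        simp only [Set.mem_setOf_eq, Set.mem_univ, iff_true]
        filter_upwards [hdeg ((t - 2 * Real.log (Nf (ε/2) hε2)) / 2),
          eventually_ge_atTop 1] with n h1 h2
        have hv1 := hv2u ε hε n h2
        have hu1 := hu_le (ε/2) hε2 n h2
        linarith
      rw [hset, hinf_univ]
    have hA : {p : ℝ | ∃ ε > (0:ℝ), p = atTop.limsup (u ε)} = {0} := by
      apply Set.eq_singleton_iff_unique_mem.2
      refine ⟨⟨1, one_pos, (hL0 1 one_pos).symm⟩, ?_⟩
      rintro p ⟨ε, hε, rfl⟩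
      exact hL0 ε hε
    have hB : {p : ℝ | ∃ ε > (0:ℝ), p = atTop.limsup (v ε)} = {0} := by
      apply Set.eq_singleton_iff_unique_mem.2
      refine ⟨⟨1, one_pos, (hM0 1 one_pos).symm⟩, ?_⟩
      rintro p ⟨ε, hε, rfl⟩
      exact hM0 ε hε
    rw [hPu, hPv, hA, hB, csSup_singleton]
    ring
  · -- nondegenerate case: all the limsups are honest infima
    obtain ⟨c, hc⟩ := not_forall.1 hdeg
    rw [Filter.not_eventually] at hc
    simp only [not_le] at hc
    have hfreq : ∃ᶠ n in atTop, c < a n / n ∧ 1 ≤ n :=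
      hc.and_eventually (eventually_ge_atTop 1)
    have hLmem : ∀ (ε : ℝ) (hε : 0 < ε),
        (Real.log (Nf ε hε) + c₁) ∈ {t : ℝ | ∀ᶠ n in atTop, u ε n ≤ t} := by
      intro ε hε
      filter_upwards [eventually_ge_atTop 1] with n hn
      have := hu_le ε hε n hn
      have := hadiv n hn
      linarith
    have hLbdd : ∀ (ε : ℝ), 0 < ε → BddBelow {t : ℝ | ∀ᶠ n in atTop, u ε n ≤ t} := by
      intro ε hε
      refine ⟨c, fun t ht => ?_⟩
      obtain ⟨n, ⟨hcn, hn1⟩, hun⟩ := (hfreq.and_eventually ht).exists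
      have := hu_ge ε hε n hn1
      linarith
    have hL2mem : ∀ (ε : ℝ) (hε : 0 < ε), ∃ t₀ : ℝ, t₀ ∈ {t : ℝ | ∀ᶠ n in atTop, v ε n ≤ t} := by
      intro ε hε
      have hε2 : 0 < ε / 2 := by linarith
      refine ⟨2 * (Real.log (Nf (ε/2) hε2) + c₁), ?_⟩
      filter_upwards [eventually_ge_atTop 1] with n hn
      have h1 := hv2u ε hε n hn
      have h2 := hu_le (ε/2) hε2 n hn
      have h3 := hadiv n hn
      linarith
    have hL2bdd : ∀ (ε : ℝ), 0 < ε → BddBelow {t : ℝ | ∀ᶠ n in atTop, v ε n ≤ t} := by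
      intro ε hε
      refine ⟨2 * c, fun t ht => ?_⟩
      obtain ⟨n, ⟨hcn, hn1⟩, hvn⟩ := (hfreq.and_eventually ht).exists
      have h1 := hu_ge ε hε n hn1
      have h2 := h2uv ε hε n hn1
      linarith
    have hlow : ∀ (ε : ℝ), 0 < ε → 2 * atTop.limsup (u ε) ≤ atTop.limsup (v ε) := by
      intro ε hε
      rw [limsup_eq, limsup_eq]
      refine le_csInf (hL2mem ε hε) (fun t ht => ?_)
      have hmem : t / 2 ∈ {t : ℝ | ∀ᶠ n in atTop, u ε n ≤ t} := by
        filter_upwards [ht, eventually_ge_atTop 1] with n hvt hn1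
        have := h2uv ε hε n hn1
        linarith
      have := csInf_le (hLbdd ε hε) hmem
      linarith
    have hhigh : ∀ (ε : ℝ), 0 < ε → atTop.limsup (v ε) ≤ 2 * atTop.limsup (u (ε/2)) := by
      intro ε hε
      have hε2 : 0 < ε / 2 := by linarith
      rw [limsup_eq, limsup_eq]
      have hstep : ∀ t ∈ {t : ℝ | ∀ᶠ n in atTop, u (ε/2) n ≤ t},
          sInf {t : ℝ | ∀ᶠ n in atTop, v ε n ≤ t} ≤ 2 * t := by
        intro t ht
        refine csInf_le (hL2bdd ε hε) ?_
        filter_upwards [ht, eventually_ge_atTop 1] with n hut hn1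
        have := hv2u ε hε n hn1
        linarith
      have h1 : sInf {t : ℝ | ∀ᶠ n in atTop, v ε n ≤ t} / 2
          ≤ sInf {t : ℝ | ∀ᶠ n in atTop, u (ε/2) n ≤ t} := by
        refine le_csInf ⟨_, hLmem (ε/2) hε2⟩ (fun t ht => ?_)
        have := hstep t ht
        linarith
      linarith
    set A : Set ℝ := {p : ℝ | ∃ ε > (0:ℝ), p = atTop.limsup (u ε)} with hA
    set B : Set ℝ := {p : ℝ | ∃ ε > (0:ℝ), p = atTop.limsup (v ε)} with hB
    have hAne : A.Nonempty := ⟨_, 1, one_pos, rfl⟩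
    have hBne : B.Nonempty := ⟨_, 1, one_pos, rfl⟩
    rw [hPu, hPv]
    by_cases hbA : BddAbove A
    · have hBub : ∀ q ∈ B, q ≤ 2 * sSup A := by
        rintro q ⟨ε, hε, rfl⟩
        have h1 := hhigh ε hε
        have h2 : atTop.limsup (u (ε/2)) ≤ sSup A :=
          le_csSup hbA ⟨ε/2, by linarith, rfl⟩
        linarith
      have hbB : BddAbove B := ⟨2 * sSup A, fun q hq => hBub q hq⟩
      refine le_antisymm (csSup_le hBne hBub) ?_
      have hAub : ∀ p ∈ A, p ≤ sSup B / 2 := by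
        rintro p ⟨ε, hε, rfl⟩
        have h1 := hlow ε hε
        have h2 : atTop.limsup (v ε) ≤ sSup B := le_csSup hbB ⟨ε, hε, rfl⟩
        linarith
      have := csSup_le hAne hAub
      linarith
    · have hbB : ¬ BddAbove B := by
        rintro ⟨b, hb⟩
        refine hbA ⟨b / 2, ?_⟩
        rintro p ⟨ε, hε, rfl⟩
        have h1 : atTop.limsup (v ε) ≤ b := hb ⟨ε, hε, rfl⟩
        have h2 := hlow ε hε
        linarith
      rw [Real.sSup_of_not_bddAbove hbA, Real.sSup_of_not_bddAbove hbB]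
      ring


end SubEq
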